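/- A matrix E ∈ M₂(ℝ̄) is idempotent (E ⊗ E = E) if and only if E is the zero matrix (all entries −∞), or there exist x, y ∈ ℝ̄ with x + y ≤ 0 such that E equals [[0, x],[y, x+y]], or [[0, x],[y, 0]], or [[x+y, x],[y, 0]]. -/

import Mathlib

open scoped Classical ENNReal

/-- The tropical semiring `ℝ̄ = ℝ ∪ {-∞}`, carried by `WithBot ℝ`;
tropical addition is `max` and tropical multiplication is `+`. -/
abbrev Rb : Type := WithBot ℝ

/-- Tropical matrix multiplication. -/
noncomputable def tMul {n : ℕ} (A B : Fin n → Fin n → Rb) : Fin n → Fin n → Rb :=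
  fun i j => Finset.univ.sup fun k => A i k + B k j

/-- The column space of a matrix: all tropical linear combinations of its columns. -/
def ColSpace {n : ℕ} (A : Fin n → Fin n → Rb) : Set (Fin n → Rb) :=
  {v | ∃ c : Fin n → Rb, ∀ i, v i = Finset.univ.sup fun j => c j + A i j}

/-- The row space of a matrix: all tropical linear combinations of its rows. -/
def RowSpace {n : ℕ} (A : Fin n → Fin n → Rb) : Set (Fin n → Rb) :=
  {v | ∃ c : Fin n → Rb, ∀ j, v j = Finset.univ.sup fun i => c i + A i j}

abbrev Mat2 : Type := Fin 2 → Fin 2 → Rb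

/-- Inclusion of `ℝ̄` into the projective line `ℝ̂ = ℝ ∪ {-∞, +∞}` (modelled by `EReal`). -/
noncomputable def toE : Rb → EReal := WithBot.recBotCoe ⊥ (fun r : ℝ => (r : EReal))

/-- Projection of a vector `(a, b)` to `b - a ∈ ℝ̂`. -/
noncomputable def projPt (v : Fin 2 → Rb) : EReal := toE (v 1) - toE (v 0)

def zeroVec : Fin 2 → Rb := fun _ => ⊥

/-- Projective column space. -/
noncomputable def PC (A : Mat2) : Set EReal :=
  {z | ∃ v ∈ ColSpace A, v ≠ zeroVec ∧ projPt v = z}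

/-- Projective row space. -/
noncomputable def PR (A : Mat2) : Set EReal :=
  {z | ∃ v ∈ RowSpace A, v ≠ zeroVec ∧ projPt v = z}

/-- The metric `δ` on `ℝ̂`. -/
noncomputable def delta (x y : EReal) : ℝ≥0∞ :=
  if (∃ a : ℝ, x = (a : EReal)) ∧ (∃ b : ℝ, y = (b : EReal)) then
    ENNReal.ofReal |x.toReal - y.toReal|
  else if x = y then 0 else ⊤

/-- `M` embeds isometrically into `N`. -/
def IsomEmbed (M N : Set EReal) : Prop :=
  ∃ f : EReal → EReal, Set.MapsTo f M N ∧ Set.InjOn f M ∧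
    ∀ x ∈ M, ∀ y ∈ M, delta (f x) (f y) = delta x y

/-- `M` and `N` are isometric. -/
def Isom (M N : Set EReal) : Prop :=
  ∃ f : EReal → EReal, Set.BijOn f M N ∧
    ∀ x ∈ M, ∀ y ∈ M, delta (f x) (f y) = delta x y

/-- Closed convex subsets of `ℝ̂`: the empty set, singletons and closed intervals. -/
def IsClosedConvex (S : Set EReal) : Prop :=
  S = ∅ ∨ ∃ x y : EReal, x ≤ y ∧ S = Set.Icc x y

lemma sup2 (f : Fin 2 → Rb) : Finset.univ.sup f = f 0 ⊔ f 1 := by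
  rw [show (Finset.univ : Finset (Fin 2)) = {0, 1} from rfl]
  simp [Finset.sup_insert, Finset.sup_singleton]

lemma tMul_apply (A B : Mat2) (i j : Fin 2) :
    tMul A B i j = (A i 0 + B 0 j) ⊔ (A i 1 + B 1 j) := sup2 _

lemma Rb.add_self_le_iff (a : Rb) : a + a ≤ a ↔ a ≤ 0 := by
  induction a using WithBot.recBotCoe with
  | bot => simp
  | coe r =>
    rw [← WithBot.coe_add, show ((0:Rb) = ((0:ℝ):Rb)) from rfl, WithBot.coe_le_coe,
      WithBot.coe_le_coe]
    constructor <;> intro h <;> linarith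

lemma Rb.add_left_eq_iff (a b : Rb) : a + b = b ↔ b = ⊥ ∨ a = 0 := by
  induction a using WithBot.recBotCoe with
  | bot => induction b using WithBot.recBotCoe <;> simp
  | coe r =>
    induction b using WithBot.recBotCoe with
    | bot => simp
    | coe s =>
      rw [← WithBot.coe_add, WithBot.coe_eq_coe]
      simp only [WithBot.coe_ne_bot, false_or, show ((0:Rb) = ((0:ℝ):Rb)) from rfl,
        WithBot.coe_eq_coe]
      constructor <;> intro h <;> linarith

lemma Rb.add_self_eq_iff (a : Rb) : a + a = a ↔ a = ⊥ ∨ a = 0 := Rb.add_left_eq_iff a a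


/-- characterisation of the idempotent `2 × 2` tropical matrices. -/
theorem idempotent_characterisation (E : Mat2) :
    tMul E E = E ↔
      E = (fun _ _ => (⊥ : Rb)) ∨
      ∃ x y : Rb, x + y ≤ 0 ∧
        (E = ![![0, x], ![y, x + y]] ∨ E = ![![0, x], ![y, 0]] ∨
          E = ![![x + y, x], ![y, 0]]) := by
  constructor
  · intro h
    have h00 : (E 0 0 + E 0 0) ⊔ (E 0 1 + E 1 0) = E 0 0 := by
      rw [← tMul_apply]; exact congrFun (congrFun h 0) 0
    have h01 : (E 0 0 + E 0 1) ⊔ (E 0 1 + E 1 1) = E 0 1 := by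
      rw [← tMul_apply]; exact congrFun (congrFun h 0) 1
    have h10 : (E 1 0 + E 0 0) ⊔ (E 1 1 + E 1 0) = E 1 0 := by
      rw [← tMul_apply]; exact congrFun (congrFun h 1) 0
    have h11 : (E 1 0 + E 0 1) ⊔ (E 1 1 + E 1 1) = E 1 1 := by
      rw [← tMul_apply]; exact congrFun (congrFun h 1) 1
    have ha : E 0 0 ≤ 0 := (Rb.add_self_le_iff _).mp (le_sup_left.trans h00.le)
    have hd : E 1 1 ≤ 0 := (Rb.add_self_le_iff _).mp (le_sup_right.trans h11.le)
    have hbc : E 0 1 + E 1 0 ≤ E 0 0 := le_sup_right.trans h00.le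
    have hcb : E 1 0 + E 0 1 ≤ E 1 1 := le_sup_left.trans h11.le
    by_cases ha0 : E 0 0 = 0
    · by_cases hd0 : E 1 1 = 0
      · refine Or.inr ⟨E 0 1, E 1 0, hbc.trans_eq ha0, Or.inr (Or.inl ?_)⟩
        funext i j
        fin_cases i <;> fin_cases j <;> simp [ha0, hd0]
      · -- a = 0, d ≠ 0 : show d = b + c, form 1
        have hdeq : E 1 1 = E 0 1 + E 1 0 := by
          rcases le_total (E 1 0 + E 0 1) (E 1 1 + E 1 1) with h' | h'
          · rw [sup_eq_right.mpr h'] at h11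
            rcases (Rb.add_self_eq_iff _).mp h11 with hb | hb
            · have : E 1 0 + E 0 1 = ⊥ := le_bot_iff.mp (hcb.trans_eq hb)
              rw [hb, ← this, add_comm]
            · exact absurd hb hd0
          · rw [sup_eq_left.mpr h'] at h11
            rw [← h11, add_comm]
        refine Or.inr ⟨E 0 1, E 1 0, hdeq ▸ hd, Or.inl ?_⟩
        funext i j
        fin_cases i <;> fin_cases j <;> simp [ha0, ← hdeq]
    · by_cases hd0 : E 1 1 = 0
      · -- d = 0, a ≠ 0 : show a = b + c, form 3
        have haeq : E 0 0 = E 0 1 + E 1 0 := by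
          rcases le_total (E 0 1 + E 1 0) (E 0 0 + E 0 0) with h' | h'
          · rw [sup_eq_left.mpr h'] at h00
            rcases (Rb.add_self_eq_iff _).mp h00 with hb | hb
            · have : E 0 1 + E 1 0 = ⊥ := le_bot_iff.mp (hbc.trans_eq hb)
              rw [hb, ← this]
            · exact absurd hb ha0
          · rw [sup_eq_right.mpr h'] at h00
            exact h00.symm
        refine Or.inr ⟨E 0 1, E 1 0, haeq ▸ ha, Or.inr (Or.inr ?_)⟩
        funext i j
        fin_cases i <;> fin_cases j <;> simp [hd0, ← haeq]
      · -- a ≠ 0, d ≠ 0 : zero matrix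
        have hb : E 0 1 = ⊥ := by
          rcases le_total (E 0 0 + E 0 1) (E 0 1 + E 1 1) with h' | h'
          · rw [sup_eq_right.mpr h'] at h01
            rw [add_comm] at h01
            rcases (Rb.add_left_eq_iff _ _).mp h01 with hb | hb
            · exact hb
            · exact absurd hb hd0
          · rw [sup_eq_left.mpr h'] at h01
            rcases (Rb.add_left_eq_iff _ _).mp h01 with hb | hb
            · exact hb
            · exact absurd hb ha0
        have hc : E 1 0 = ⊥ := by
          rcases le_total (E 1 0 + E 0 0) (E 1 1 + E 1 0) with h' | h'
          · rw [sup_eq_right.mpr h'] at h10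
            rcases (Rb.add_left_eq_iff _ _).mp h10 with hb' | hb'
            · exact hb'
            · exact absurd hb' hd0
          · rw [sup_eq_left.mpr h'] at h10
            rw [add_comm] at h10
            rcases (Rb.add_left_eq_iff _ _).mp h10 with hb' | hb'
            · exact hb'
            · exact absurd hb' ha0
        have habot : E 0 0 = ⊥ := by
          rw [hb, hc] at h00
          simp only [WithBot.bot_add, WithBot.add_bot, sup_bot_eq] at h00
          rcases (Rb.add_self_eq_iff _).mp h00 with h' | h'
          · exact h'
          · exact absurd h' ha0
        have hdbot : E 1 1 = ⊥ := by
          rw [hb, hc] at h11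
          simp only [WithBot.bot_add, WithBot.add_bot, bot_sup_eq] at h11
          rcases (Rb.add_self_eq_iff _).mp h11 with h' | h'
          · exact h'
          · exact absurd h' hd0
        refine Or.inl ?_
        funext i j
        fin_cases i <;> fin_cases j <;> assumption
  · rintro (h | ⟨x, y, hxy, h | h | h⟩) <;> subst h
    · funext i j; rw [tMul_apply]; simp
    all_goals {
      have hx : x + (x + y) ≤ x := by
        calc x + (x + y) ≤ x + 0 := add_le_add le_rfl hxy
        _ = x := add_zero x
      have hy : (x + y) + y ≤ y := by
        rw [add_comm]
        calc y + (x + y) ≤ y + 0 := add_le_add le_rfl hxy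
        _ = y := add_zero y
      have hxy2 : (x + y) + (x + y) ≤ x + y := by
        calc (x + y) + (x + y) ≤ (x + y) + 0 := add_le_add le_rfl hxy
        _ = x + y := add_zero _
      have hyx : y + x ≤ 0 := by rw [add_comm]; exact hxy
      funext i j
      fin_cases i <;> fin_cases j <;> rw [tMul_apply] <;>
        simp only [Fin.mk_zero, Fin.mk_one, Fin.isValue, Matrix.cons_val_zero,
          Matrix.cons_val_one, Matrix.head_cons, Matrix.head_fin_const, zero_add, add_zero] <;>
        first
          | exact sup_eq_left.mpr hxy
          | exact sup_eq_left.mpr hx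
          | exact sup_eq_left.mpr hy
          | exact sup_eq_left.mpr hxy2
          | exact sup_eq_right.mpr hxy2
          | exact sup_idem _
          | (rw [add_comm y x]; exact sup_eq_left.mpr hxy2)
          | exact sup_eq_right.mpr hyx
          | (rw [add_comm (x+y) x]; exact sup_eq_right.mpr hx)
          | (rw [add_comm y (x+y)]; exact sup_eq_right.mpr hy)
    }
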